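/- arXiv:math/0407031 — 3 statements merged into one kernel-verified Lean document; each statement's English description precedes it below -/
import Mathlib

section
/- Suppose (i) coproducts of arbitrary families of objects of 𝐚 exist in 𝐀 and belong to 𝐚 again, and (ii) there is a small full subcategory 𝐠 of 𝐚 such that every object of 𝐚 is a retract of a coproduct of a family of objects from 𝐠. Then every object of 𝐀 has an 𝐚-resolution. -/
/-!
STATEMENT 0. Let `𝐀` be an additive category and `𝐚` a full (additive) subcategory,
encoded by a predicate `P` on objects.  Suppose (i) coproducts of arbitrary families of
objects of `𝐚` exist in `𝐀` and belong to `𝐚` again, and (ii) there is a small full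
subcategory `𝐠` of `𝐚` (encoded by a family `G : κ → C` of objects of `𝐚`) such that
every object of `𝐚` is a retract of a coproduct of a family of objects from `𝐠`.
Then every object of `𝐀` has an `𝐚`-resolution.
-/

open CategoryTheory CategoryTheory.Limits

universe v u

/-- A `ℤ`-indexed chain complex in an additive category `C`. -/
structure ChainComplexZ (C : Type u) [Category.{v} C] [Preadditive C] where
  X : ℤ → C
  d : ∀ n : ℤ, X (n + 1) ⟶ X n
  dd : ∀ n : ℤ, d (n + 1) ≫ d n = 0

namespace ChainComplexZ

variable {C : Type u} [Category.{v} C] [Preadditive C]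

/-- The chain complex of abelian groups `Hom(T, A_•)` is exact (acyclic). -/
def HomExact (A : ChainComplexZ C) (T : C) : Prop :=
  ∀ (n : ℤ) (a : T ⟶ A.X (n + 1)), a ≫ A.d n = 0 →
    ∃ b : T ⟶ A.X (n + 1 + 1), b ≫ A.d (n + 1) = a

/-- `𝐚`-exactness of a chain complex, where `𝐚` is the full subcategory on
objects satisfying `P`. -/
def aExact (A : ChainComplexZ C) (P : C → Prop) : Prop :=
  ∀ T : C, P T → A.HomExact T

/-- An `A₀`-augmented chain complex: `A_{-1} = A₀` and `A_{-n} = 0` for `n > 1`. -/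
structure IsAugmented (A : ChainComplexZ C) (A₀ : C) : Prop where
  eq_neg_one : A.X (-1) = A₀
  isZero_of_lt : ∀ n : ℤ, n < -1 → IsZero (A.X n)

/-- An `𝐚`-resolution of `A₀`: an `𝐚`-exact `A₀`-augmented chain complex with all
terms in nonnegative degrees in `𝐚`. -/
structure IsResolution (A : ChainComplexZ C) (P : C → Prop) (A₀ : C) : Prop where
  augmented : A.IsAugmented A₀
  exact : A.aExact P
  mem : ∀ n : ℤ, 0 ≤ n → P (A.X n)

end ChainComplexZ

namespace Statement0Aux

structure AuxState (C : Type u) [Category.{v} C] where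
  B : C
  T : C
  e : B ⟶ T

variable {C : Type u} [Category.{v} C] [Preadditive C]
  (P : C → Prop)
  (hcoprod : ∀ (ι : Type v) (f : ι → C), (∀ i, P (f i)) →
      ∃ c : Cofan f, Nonempty (IsColimit c) ∧ P c.pt)
  {κ : Type v} (G : κ → C) (hG : ∀ k, P (G k))

/-- index type for the canonical step -/
def AuxIdx (σ : AuxState C) : Type v := Σ k : κ, {f : G k ⟶ σ.B // f ≫ σ.e = 0}

noncomputable def stepCofan (σ : AuxState C) : Cofan (fun j : AuxIdx G σ => G j.1) :=
  (hcoprod (AuxIdx G σ) (fun j => G j.1) (fun j => hG j.1)).choose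

noncomputable def stepColim (σ : AuxState C) :
    IsColimit (stepCofan P hcoprod G hG σ) :=
  (hcoprod (AuxIdx G σ) (fun j => G j.1) (fun j => hG j.1)).choose_spec.1.some

lemma stepP (σ : AuxState C) : P (stepCofan P hcoprod G hG σ).pt :=
  (hcoprod (AuxIdx G σ) (fun j => G j.1) (fun j => hG j.1)).choose_spec.2

noncomputable def step (σ : AuxState C) : AuxState C where
  B := (stepCofan P hcoprod G hG σ).pt
  T := σ.B
  e := Cofan.IsColimit.desc (stepColim P hcoprod G hG σ) (fun j => j.2.1)

lemma step_e (σ : AuxState C) :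
    (step P hcoprod G hG σ).e
      = Cofan.IsColimit.desc (stepColim P hcoprod G hG σ) (fun j => j.2.1) := rfl

lemma step_comp (σ : AuxState C) :
    (step P hcoprod G hG σ).e ≫ σ.e = 0 := by
  apply Cofan.IsColimit.hom_ext (stepColim P hcoprod G hG σ)
  intro j
  show (stepCofan P hcoprod G hG σ).inj j ≫
      (Cofan.IsColimit.desc (stepColim P hcoprod G hG σ) (fun j : AuxIdx G σ => j.2.1) ≫ σ.e) =
    (stepCofan P hcoprod G hG σ).inj j ≫ 0
  rw [comp_zero, ← Category.assoc, Cofan.IsColimit.fac]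
  exact j.2.2

lemma step_lift
    (hret : ∀ X : C, P X → ∃ (ι : Type v) (s : ι → κ) (c : Cofan (fun i => G (s i))),
        Nonempty (IsColimit c) ∧ ∃ (r : X ⟶ c.pt) (q : c.pt ⟶ X), r ≫ q = 𝟙 X)
    (σ : AuxState C) (T : C) (hT : P T) (a : T ⟶ σ.B) (ha : a ≫ σ.e = 0) :
    ∃ b : T ⟶ (step P hcoprod G hG σ).B, b ≫ (step P hcoprod G hG σ).e = a := by
  obtain ⟨ι, s, c, ⟨hc⟩, r, q, hrq⟩ := hret T hT
  have hidx : ∀ i : ι, (c.inj i ≫ q ≫ a) ≫ σ.e = 0 := by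
    intro i; rw [Category.assoc, Category.assoc, ha, comp_zero, comp_zero]
  let j : ι → AuxIdx G σ := fun i => ⟨s i, ⟨c.inj i ≫ q ≫ a, hidx i⟩⟩
  let φ : c.pt ⟶ (step P hcoprod G hG σ).B :=
    Cofan.IsColimit.desc hc (fun i => (stepCofan P hcoprod G hG σ).inj (j i))
  have hφ : φ ≫ (step P hcoprod G hG σ).e = q ≫ a := by
    apply Cofan.IsColimit.hom_ext hc
    intro i
    show c.inj i ≫ φ ≫
      Cofan.IsColimit.desc (stepColim P hcoprod G hG σ) (fun j : AuxIdx G σ => j.2.1) =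
      c.inj i ≫ q ≫ a
    have h1 : c.inj i ≫ φ = (stepCofan P hcoprod G hG σ).inj (j i) := Cofan.IsColimit.fac hc _ i
    have h2 := Cofan.IsColimit.fac (stepColim P hcoprod G hG σ) (fun j : AuxIdx G σ => j.2.1) (j i)
    exact (Category.assoc _ _ _).symm.trans
      ((congrArg (fun x => x ≫ Cofan.IsColimit.desc (stepColim P hcoprod G hG σ)
        (fun j : AuxIdx G σ => j.2.1)) h1).trans h2)
  refine ⟨r ≫ φ, ?_⟩
  rw [Category.assoc, hφ]
  show r ≫ q ≫ a = a
  rw [← Category.assoc, hrq, Category.id_comp]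

noncomputable def seq (A₀ Z : C) : ℕ → AuxState C
  | 0 => ⟨A₀, Z, 0⟩
  | n + 1 => step P hcoprod G hG (seq A₀ Z n)

noncomputable def RX (A₀ Z : C) : ℤ → C
  | .ofNat n => (seq P hcoprod G hG A₀ Z (n + 1)).B
  | .negSucc 0 => A₀
  | .negSucc (_ + 1) => Z

noncomputable def Rd (A₀ Z : C) : ∀ n : ℤ, RX P hcoprod G hG A₀ Z (n + 1) ⟶ RX P hcoprod G hG A₀ Z n
  | .ofNat n => (seq P hcoprod G hG A₀ Z (n + 2)).e
  | .negSucc 0 => (seq P hcoprod G hG A₀ Z 1).e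
  | .negSucc (_ + 1) => 0

end Statement0Aux

open Statement0Aux in
theorem statement0 {C : Type u} [Category.{v} C] [Preadditive C]
    [HasFiniteBiproducts C] [HasZeroObject C]
    (P : C → Prop)
    -- (i) coproducts of arbitrary families of objects of `𝐚` exist and lie in `𝐚`:
    (hcoprod : ∀ (ι : Type v) (f : ι → C), (∀ i, P (f i)) →
      ∃ c : Cofan f, Nonempty (IsColimit c) ∧ P c.pt)
    -- (ii) a small (full) subcategory `𝐠 ⊆ 𝐚` such that every object of `𝐚` is a
    -- retract of a coproduct of a family of objects of `𝐠`:
    (hgen : ∃ (κ : Type v) (G : κ → C), (∀ k, P (G k)) ∧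
      ∀ X : C, P X → ∃ (ι : Type v) (s : ι → κ) (c : Cofan (fun i => G (s i))),
        Nonempty (IsColimit c) ∧ ∃ (r : X ⟶ c.pt) (q : c.pt ⟶ X), r ≫ q = 𝟙 X) :
    -- then every object of `𝐀` has an `𝐚`-resolution:
    ∀ A₀ : C, ∃ R : ChainComplexZ C, R.IsResolution P A₀ := by
  intro A₀
  obtain ⟨κ, G, hG, hret⟩ := hgen
  obtain ⟨Z, hZ⟩ := HasZeroObject.zero (C := C)
  refine ⟨⟨RX P hcoprod G hG A₀ Z, Rd P hcoprod G hG A₀ Z, ?_⟩, ?_, ?_, ?_⟩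
  · -- dd
    intro n
    match n with
    | .ofNat m => exact step_comp P hcoprod G hG (seq P hcoprod G hG A₀ Z (m + 2))
    | .negSucc 0 => exact step_comp P hcoprod G hG (seq P hcoprod G hG A₀ Z 1)
    | .negSucc 1 => exact comp_zero
    | .negSucc (m + 2) => exact comp_zero
  · -- augmented
    constructor
    · rfl
    · intro n hn
      match n with
      | .ofNat m => exact absurd hn (by rw [Int.ofNat_eq_natCast]; omega)
      | .negSucc 0 => exact absurd hn (by decide)
      | .negSucc (m + 1) => exact hZ
  · -- exact
    intro T hT n a ha
    match n with
    | .ofNat m =>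
        exact step_lift P hcoprod G hG hret (seq P hcoprod G hG A₀ Z (m + 2)) T hT a ha
    | .negSucc 0 =>
        exact step_lift P hcoprod G hG hret (seq P hcoprod G hG A₀ Z 1) T hT a ha
    | .negSucc 1 =>
        exact step_lift P hcoprod G hG hret (seq P hcoprod G hG A₀ Z 0) T hT a comp_zero
    | .negSucc (m + 2) =>
        exact ⟨0, hZ.eq_of_tgt _ _⟩
  · -- mem
    intro n hn
    match n with
    | .ofNat m => exact stepP P hcoprod G hG (seq P hcoprod G hG A₀ Z m)
    | .negSucc m => exact absurd hn (not_le.mpr (Int.negSucc_lt_zero m))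
end

section
/- Let 𝐛 be a full track subcategory of 𝐁 and let B_• and B'_• be two B-augmented secondary chain complexes in 𝐁. If all B_n (n ≥ 0) belong to 𝐛 and B'_• is 𝐛-exact, then there exists a secondary chain map (f,φ) : B_• → B'_• over B, i.e. with f_{-1} equal to the identity of B. -/
/-!
Track categories.  A track category is a category enriched in groupoids, i.e. a strict
2-category (`Bicategory` + `Bicategory.Strict`) all of whose 2-cells ("tracks") are
invertible.  Invertibility of all 2-cells is imposed by the hypothesis `hinv` below.
A strict zero object is an object whose hom-groupoids from and to any object are
trivial (exactly one map, exactly one track).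
-/

open CategoryTheory CategoryTheory.Bicategory

universe w v u

/-- A strict zero object `∗` in a (strict) track category: for every `X` the
hom-groupoids `⟦X,∗⟧` and `⟦∗,X⟧` have exactly one object and one morphism. -/
class StrictZero (B : Type u) [Bicategory.{w, v} B] where
  zobj : B
  uniqueTo : ∀ X : B, Unique (X ⟶ zobj)
  uniqueFrom : ∀ X : B, Unique (zobj ⟶ X)
  uniqueTrackTo : ∀ (X : B) (f g : X ⟶ zobj), Unique (f ⟶ g)
  uniqueTrackFrom : ∀ (X : B) (f g : zobj ⟶ X), Unique (f ⟶ g)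

section

variable {B : Type u} [Bicategory.{w, v} B] [Bicategory.Strict B] [StrictZero B]

/-- The zero map `0_{X,Y} : X → ∗ → Y`. -/
def zmap (X Y : B) : X ⟶ Y :=
  (StrictZero.uniqueTo X).default ≫ (StrictZero.uniqueFrom Y).default

lemma zmap_comp (X : B) {Y Z : B} (f : Y ⟶ Z) : zmap X Y ≫ f = zmap X Z := by
  unfold zmap
  rw [Bicategory.Strict.assoc]
  congr 1
  haveI := StrictZero.uniqueFrom (B := B) Z
  exact Subsingleton.elim _ _

lemma comp_zmap {X Y : B} (f : X ⟶ Y) (Z : B) : f ≫ zmap Y Z = zmap X Z := by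
  unfold zmap
  rw [← Bicategory.Strict.assoc]
  congr 1
  haveI := StrictZero.uniqueTo (B := B) X
  exact Subsingleton.elim _ _

end

/-- A secondary chain complex `(A, d, δ)` in a track category `B`: objects `A_n`, maps
`d_n : A_{n+1} ⟶ A_n` and tracks `δ_n : d_n d_{n+1} ⇒ 0` such that
`d_{n-1} δ_n = δ_{n-1} d_{n+1}` (as tracks `d_{n-1} d_n d_{n+1} ⇒ 0`). -/
structure SecChainComplex (B : Type u) [Bicategory.{w, v} B] [Bicategory.Strict B]
    [StrictZero B] where
  X : ℤ → B
  d : ∀ n : ℤ, X (n + 1) ⟶ X n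
  δ : ∀ n : ℤ, (d (n + 1) ≫ d n) ⟶ zmap (X (n + 1 + 1)) (X n)
  compat : ∀ n : ℤ,
    (δ (n + 1) ▷ d n) ≫ eqToHom (zmap_comp (X (n + 1 + 1 + 1)) (d n)) =
      eqToHom (Bicategory.Strict.assoc (d (n + 1 + 1)) (d (n + 1)) (d n)) ≫
        (d (n + 1 + 1) ◁ δ n) ≫ eqToHom (comp_zmap (d (n + 1 + 1)) (X n))

namespace SecChainComplex

variable {B : Type u} [Bicategory.{w, v} B] [Bicategory.Strict B] [StrictZero B]

/-- A `𝐛`-cycle of degree `n+2` in a secondary chain complex: a map `c : T ⟶ A_{n+2}`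
together with a track `γ : d_{n+1} c ⇒ 0` such that `d_n γ = δ_n c`. -/
def IsSecCycle (A : SecChainComplex B) {T : B} (n : ℤ) (c : T ⟶ A.X (n + 1 + 1))
    (γ : c ≫ A.d (n + 1) ⟶ zmap T (A.X (n + 1))) : Prop :=
  (γ ▷ A.d n) ≫ eqToHom (zmap_comp T (A.d n)) =
    eqToHom (Bicategory.Strict.assoc c (A.d (n + 1)) (A.d n)) ≫
      (c ◁ A.δ n) ≫ eqToHom (comp_zmap c (A.X n))

/-- A `𝐛`-cycle `(c,γ)` is a `𝐛`-boundary if there are `a : T ⟶ A_{n+3}` and a track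
`α : c ⇒ d_{n+2} a` with `γ = δ_{n+1} a □ d_{n+1} α`. -/
def IsSecBoundary (A : SecChainComplex B) {T : B} (n : ℤ) (c : T ⟶ A.X (n + 1 + 1))
    (γ : c ≫ A.d (n + 1) ⟶ zmap T (A.X (n + 1))) : Prop :=
  ∃ (a : T ⟶ A.X (n + 1 + 1 + 1)) (α : c ⟶ a ≫ A.d (n + 1 + 1)),
    γ = (α ▷ A.d (n + 1)) ≫
        eqToHom (Bicategory.Strict.assoc a (A.d (n + 1 + 1)) (A.d (n + 1))) ≫
        (a ◁ A.δ (n + 1)) ≫ eqToHom (comp_zmap a (A.X (n + 1)))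

/-- `𝐛`-exactness of a secondary chain complex, `𝐛` being the full track subcategory
on the objects satisfying `Pb`: every `𝐛`-cycle is a `𝐛`-boundary. -/
def IsSecExact (A : SecChainComplex B) (Pb : B → Prop) : Prop :=
  ∀ (n : ℤ) (T : B), Pb T → ∀ (c : T ⟶ A.X (n + 1 + 1))
    (γ : c ≫ A.d (n + 1) ⟶ zmap T (A.X (n + 1))),
    A.IsSecCycle n c γ → A.IsSecBoundary n c γ

/-- A `B₀`-augmented secondary chain complex: `X_{-1} = B₀`, `X_{-n} = ∗` and
`δ_{-n}` the identity track for `n > 1`. -/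
structure IsAugmented (A : SecChainComplex B) (B₀ : B) : Prop where
  eq_neg_one : A.X (-1) = B₀
  eq_zero_of_lt : ∀ n : ℤ, n < -1 → A.X n = StrictZero.zobj (B := B)
  δ_eqToHom : ∀ n : ℤ, n < -1 →
    ∀ h : A.d (n + 1) ≫ A.d n = zmap (A.X (n + 1 + 1)) (A.X n), A.δ n = eqToHom h

/-- A `𝐛`-resolution of `B₀`: a `𝐛`-exact `B₀`-augmented secondary chain complex with
all terms in nonnegative degrees in `𝐛`. -/
structure IsSecResolution (A : SecChainComplex B) (Pb : B → Prop) (B₀ : B) : Prop where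
  augmented : A.IsAugmented B₀
  exact : A.IsSecExact Pb
  mem : ∀ n : ℤ, 0 ≤ n → Pb (A.X n)

end SecChainComplex

/-!
STATEMENT 12. Secondary comparison: if `B_•` and `B'_•` are `B₀`-augmented secondary
chain complexes, all `B_n` (`n ≥ 0`) lie in `𝐛`, and `B'_•` is `𝐛`-exact, then there
is a secondary chain map `(f,φ) : B_• → B'_•` over `B₀`, i.e. with `f_{-1} = 𝟙 B₀`.
-/

section Statement12

variable {B : Type u} [Bicategory.{w, v} B] [Bicategory.Strict B] [StrictZero B]

/-- A secondary chain map `(f,φ) : (A,d,δ) → (A',d',δ')`: maps `f_n : A_n ⟶ A'_n` and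
tracks `φ_n : f_n d_n ⇒ d'_n f_{n+1}` such that
`δ'_{n-1} f_{n+1} □ d'_{n-1} φ_n □ φ_{n-1} d_n = f_{n-1} δ_{n-1}`
as tracks `f_{n-1} d_{n-1} d_n ⇒ 0` for all `n`. -/
def IsSecChainMap (A A' : SecChainComplex B) (f : ∀ n : ℤ, A.X n ⟶ A'.X n)
    (φ : ∀ n : ℤ, (A.d n ≫ f n) ⟶ (f (n + 1) ≫ A'.d n)) : Prop :=
  ∀ n : ℤ,
    eqToHom (Bicategory.Strict.assoc (A.d (n + 1)) (A.d n) (f n)) ≫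
        (A.d (n + 1) ◁ φ n) ≫
        eqToHom (Bicategory.Strict.assoc (A.d (n + 1)) (f (n + 1)) (A'.d n)).symm ≫
        (φ (n + 1) ▷ A'.d n) ≫
        eqToHom (Bicategory.Strict.assoc (f (n + 1 + 1)) (A'.d (n + 1)) (A'.d n)) ≫
        (f (n + 1 + 1) ◁ A'.δ n) ≫
        eqToHom (comp_zmap (f (n + 1 + 1)) (A'.X n)) =
      (A.δ n ▷ f n) ≫ eqToHom (zmap_comp (A.X (n + 1 + 1)) (f n))

/-! ### Auxiliary machinery for the proof of Statement 12 -/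

open StrictZero SecChainComplex

lemma hom_eq_of_zero {X Y : B} (hY : Y = zobj (B := B)) (u v : X ⟶ Y) : u = v := by
  subst hY
  haveI := uniqueTo (B := B) X
  exact Subsingleton.elim u v

lemma track_eq_of_zero {X Y : B} (hY : Y = zobj (B := B)) {u v : X ⟶ Y} (θ η : u ⟶ v) :
    θ = η := by
  subst hY
  haveI := uniqueTrackTo (B := B) X u v
  exact Subsingleton.elim θ η

/-- A canonical track between any two parallel 1-cells into (an object equal to) the
zero object. -/
noncomputable def zeroTrack {X Y : B} (hY : Y = zobj (B := B)) (u v : X ⟶ Y) : u ⟶ v := by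
  subst hY
  exact (uniqueTrackTo (B := B) X u v).default

lemma track_from_zero {Z : B} {p q : (zobj (B := B) : B) ⟶ Z} (θ : p ⟶ q) :
    θ = eqToHom (by haveI := uniqueFrom (B := B) Z; exact Subsingleton.elim p q) := by
  haveI := uniqueTrackFrom (B := B) Z p q
  exact Subsingleton.elim θ _

lemma zmap_whiskerLeft {X Y Z : B} {u v : Y ⟶ Z} (θ : u ⟶ v) :
    zmap X Y ◁ θ = eqToHom ((zmap_comp X u).trans (zmap_comp X v).symm) := by
  show ((uniqueTo (B := B) X).default ≫ (uniqueFrom (B := B) Y).default) ◁ θ = _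
  rw [Bicategory.comp_whiskerLeft, track_from_zero ((uniqueFrom (B := B) Y).default ◁ θ)]
  simp [Bicategory.Strict.associator_eqToIso, eqToHom_trans]
  rfl

section Machinery

variable (hinv : ∀ {X' Y' : B} {f g : X' ⟶ Y'} (η : f ⟶ g), IsIso η)
variable (A A' : SecChainComplex B)

/-- The canonical track `d_{n+2} f_{n+2} d'_{n+1} ⇒ 0` built from `φ_{n+1}` and
`δ_{n+1}`. -/
noncomputable def gam (n : ℤ) (f1 : A.X (n+1) ⟶ A'.X (n+1))
    (f2 : A.X (n+1+1) ⟶ A'.X (n+1+1))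
    (φ : (A.d (n+1) ≫ f1) ⟶ (f2 ≫ A'.d (n+1))) :
    ((A.d (n+1+1) ≫ f2) ≫ A'.d (n+1)) ⟶ zmap (A.X (n+1+1+1)) (A'.X (n+1)) :=
  haveI := hinv (A.d (n+1+1) ◁ φ)
  eqToHom (Bicategory.Strict.assoc (A.d (n+1+1)) f2 (A'.d (n+1))) ≫
    inv (A.d (n+1+1) ◁ φ) ≫
    eqToHom (Bicategory.Strict.assoc (A.d (n+1+1)) (A.d (n+1)) f1).symm ≫
    (A.δ (n+1) ▷ f1) ≫ eqToHom (zmap_comp (A.X (n+1+1+1)) f1)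

/-- The chain-map condition in a single degree, with the maps and tracks explicit. -/
def ChainEq (n : ℤ) (f0 : A.X n ⟶ A'.X n) (f1 : A.X (n+1) ⟶ A'.X (n+1))
    (f2 : A.X (n+1+1) ⟶ A'.X (n+1+1))
    (φ0 : (A.d n ≫ f0) ⟶ (f1 ≫ A'.d n))
    (φ1 : (A.d (n+1) ≫ f1) ⟶ (f2 ≫ A'.d (n+1))) : Prop :=
  eqToHom (Bicategory.Strict.assoc (A.d (n + 1)) (A.d n) f0) ≫
      (A.d (n + 1) ◁ φ0) ≫
      eqToHom (Bicategory.Strict.assoc (A.d (n + 1)) f1 (A'.d n)).symm ≫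
      (φ1 ▷ A'.d n) ≫
      eqToHom (Bicategory.Strict.assoc f2 (A'.d (n + 1)) (A'.d n)) ≫
      (f2 ◁ A'.δ n) ≫
      eqToHom (comp_zmap f2 (A'.X n)) =
    (A.δ n ▷ f0) ≫ eqToHom (zmap_comp (A.X (n + 1 + 1)) f0)

lemma chain_of_boundary {n : ℤ} {f1 : A.X (n+1) ⟶ A'.X (n+1)}
    {f2 : A.X (n+1+1) ⟶ A'.X (n+1+1)} {f3 : A.X (n+1+1+1) ⟶ A'.X (n+1+1+1)}
    {φ1 : (A.d (n+1) ≫ f1) ⟶ (f2 ≫ A'.d (n+1))}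
    {φ2 : (A.d (n+1+1) ≫ f2) ⟶ (f3 ≫ A'.d (n+1+1))}
    (h : gam hinv A A' n f1 f2 φ1 =
      (φ2 ▷ A'.d (n+1)) ≫
        eqToHom (Bicategory.Strict.assoc f3 (A'.d (n+1+1)) (A'.d (n+1))) ≫
        (f3 ◁ A'.δ (n+1)) ≫ eqToHom (comp_zmap f3 (A'.X (n+1)))) :
    ChainEq A A' (n+1) f1 f2 f3 φ1 φ2 := by
  haveI := hinv (A.d (n+1+1) ◁ φ1)
  unfold ChainEq
  rw [← h]
  unfold gam
  simp only [Category.assoc, eqToHom_trans_assoc, eqToHom_refl, Category.id_comp]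
  rw [IsIso.hom_inv_id_assoc]
  simp [eqToHom_trans_assoc]

lemma cyc_step {n : ℤ} {f1 : A.X (n+1) ⟶ A'.X (n+1)}
    {f2 : A.X (n+1+1) ⟶ A'.X (n+1+1)} {f3 : A.X (n+1+1+1) ⟶ A'.X (n+1+1+1)}
    {φ1 : (A.d (n+1) ≫ f1) ⟶ (f2 ≫ A'.d (n+1))}
    {φ2 : (A.d (n+1+1) ≫ f2) ⟶ (f3 ≫ A'.d (n+1+1))}
    (hch : ChainEq A A' (n+1) f1 f2 f3 φ1 φ2) :
    A'.IsSecCycle (n+1) (A.d (n+1+1+1) ≫ f3) (gam hinv A A' (n+1) f2 f3 φ2) := by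
  haveI := hinv (A.d (n+1+1+1) ◁ φ2)
  unfold IsSecCycle gam
  simp only [Bicategory.comp_whiskerRight, Bicategory.eqToHom_whiskerRight, Category.assoc,
    Bicategory.Strict.associator_eqToIso, eqToIso.hom, eqToIso.inv, eqToHom_trans,
    eqToHom_trans_assoc]
  -- commute inv past the whiskering
  have hw : CategoryTheory.inv (A.d (n+1+1+1) ◁ φ2) ▷ A'.d (n+1)
      = CategoryTheory.inv ((A.d (n+1+1+1) ◁ φ2) ▷ A'.d (n+1)) := by
    haveI := hinv ((A.d (n+1+1+1) ◁ φ2) ▷ A'.d (n+1))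
    symm
    apply IsIso.inv_eq_of_hom_inv_id
    rw [← Bicategory.comp_whiskerRight, IsIso.hom_inv_id, Bicategory.id_whiskerRight]
  rw [hw]
  haveI := hinv ((A.d (n+1+1+1) ◁ φ2) ▷ A'.d (n+1))
  rw [eqToHom_comp_iff, IsIso.inv_comp_eq]
  -- cancel the (iso) whiskered phi1
  haveI := hinv ((A.d (n+1+1+1) ≫ A.d (n+1+1)) ◁ φ1)
  have eb' : ((A.d (n+1+1+1) ≫ A.d (n+1+1)) ≫ (f2 ≫ A'.d (n+1)) : A.X (n+1+1+1+1) ⟶ A'.X (n+1))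
      = (A.d (n+1+1+1) ≫ (A.d (n+1+1) ≫ f2)) ≫ A'.d (n+1) := by
    simp [Bicategory.Strict.assoc]
  rw [← cancel_epi (((A.d (n+1+1+1) ≫ A.d (n+1+1)) ◁ φ1) ≫ eqToHom eb')]
  have pz : zmap (A.X (n+1+1+1+1)) (A.X (n+1+1)) ≫ (A.d (n+1) ≫ f1)
      = zmap (A.X (n+1+1+1+1)) (A'.X (n+1)) := by rw [zmap_comp]
  trans (A.δ (n+1+1) ▷ (A.d (n+1) ≫ f1)) ≫ eqToHom pz
  · -- left-hand side computation, via the interchange law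
    have s1 := Bicategory.whiskerRight_comp (A.δ (n+1+1)) f2 (A'.d (n+1))
    simp only [Bicategory.Strict.associator_eqToIso, eqToIso.hom, eqToIso.inv] at s1
    have s1' : A.δ (n+1+1) ▷ f2 ▷ A'.d (n+1) =
        eqToHom (by simp [Bicategory.Strict.assoc]) ≫
          (A.δ (n+1+1) ▷ (f2 ≫ A'.d (n+1))) ≫
          eqToHom (by simp [Bicategory.Strict.assoc]) := by
      rw [s1]
      simp [eqToHom_trans_assoc, eqToHom_trans]
    rw [s1']
    simp only [Category.assoc, eqToHom_trans_assoc, eqToHom_refl, Category.id_comp]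
    rw [Bicategory.whisker_exchange_assoc]
    rw [zmap_whiskerLeft]
    simp [eqToHom_trans]
  · -- right-hand side computation, via compat and the chain-map condition
    have cpt := A.compat (n+1)
    rw [comp_eqToHom_iff] at cpt
    have s3 := Bicategory.whiskerRight_comp (A.δ (n+1+1)) (A.d (n+1)) f1
    simp only [Bicategory.Strict.associator_eqToIso, eqToIso.hom, eqToIso.inv] at s3
    rw [s3, cpt]
    simp only [Bicategory.comp_whiskerRight, Bicategory.eqToHom_whiskerRight,
      Category.assoc, eqToHom_trans_assoc]
    have s5 := Bicategory.whisker_assoc (A.d (n+1+1+1)) (A.δ (n+1)) f1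
    simp only [Bicategory.Strict.associator_eqToIso, eqToIso.hom, eqToIso.inv] at s5
    rw [s5]
    unfold ChainEq at hch
    rw [eq_comm, comp_eqToHom_iff] at hch
    rw [hch]
    simp only [Bicategory.whiskerLeft_comp, Bicategory.whiskerLeft_eqToHom,
      Category.assoc, eqToHom_trans_assoc]
    have s7 := Bicategory.comp_whiskerLeft_symm (A.d (n+1+1+1)) (A.d (n+1+1)) φ1
    simp only [Bicategory.Strict.associator_eqToIso, eqToIso.hom, eqToIso.inv] at s7
    rw [s7]
    have s8 := Bicategory.whisker_assoc_symm (A.d (n+1+1+1)) φ2 (A'.d (n+1))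
    simp only [Bicategory.Strict.associator_eqToIso, eqToIso.hom, eqToIso.inv] at s8
    rw [s8]
    have s9 := Bicategory.comp_whiskerLeft_symm (A.d (n+1+1+1)) f3 (A'.δ (n+1))
    simp only [Bicategory.Strict.associator_eqToIso, eqToIso.hom, eqToIso.inv] at s9
    rw [s9]
    simp [eqToHom_trans_assoc, eqToHom_trans]

/-- The inductive data: a window of a secondary chain map under construction. -/
structure Data : Type (max u v w) where
  n : ℤ
  hn : -2 ≤ n
  f0 : A.X n ⟶ A'.X n
  f1 : A.X (n+1) ⟶ A'.X (n+1)
  f2 : A.X (n+1+1) ⟶ A'.X (n+1+1)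
  φ0 : (A.d n ≫ f0) ⟶ (f1 ≫ A'.d n)
  φ1 : (A.d (n+1) ≫ f1) ⟶ (f2 ≫ A'.d (n+1))
  chain : ChainEq A A' n f0 f1 f2 φ0 φ1
  cyc : A'.IsSecCycle n (A.d (n+1+1) ≫ f2) (gam hinv A A' n f1 f2 φ1)

end Machinery

section Tower

variable (hinv : ∀ {X' Y' : B} {f g : X' ⟶ Y'} (η : f ⟶ g), IsIso η)
variable (Pb : B → Prop) (B₀ : B) (A A' : SecChainComplex B)
variable (hA : A.IsAugmented B₀) (hA' : A'.IsAugmented B₀)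
variable (hmem : ∀ n : ℤ, 0 ≤ n → Pb (A.X n)) (hex : A'.IsSecExact Pb)

/-- One step of the inductive construction, using `𝐛`-exactness of `A'`. -/
noncomputable def step (d : Data hinv A A') : Data hinv A A' :=
  let hb := hex d.n (A.X (d.n+1+1+1)) (hmem (d.n+1+1+1) (by have := d.hn; omega))
    (A.d (d.n+1+1) ≫ d.f2) (gam hinv A A' d.n d.f1 d.f2 d.φ1) d.cyc
  { n := d.n + 1
    hn := by have := d.hn; omega
    f0 := d.f1
    f1 := d.f2
    f2 := hb.choose
    φ0 := d.φ1
    φ1 := hb.choose_spec.choose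
    chain := chain_of_boundary hinv A A' hb.choose_spec.choose_spec
    cyc := cyc_step hinv A A' (chain_of_boundary hinv A A' hb.choose_spec.choose_spec) }

/-- The base of the induction, at `n = -2`. -/
noncomputable def base : Data hinv A A' :=
  let e1 : A.X (-1) = A'.X (-1) := hA.eq_neg_one.trans hA'.eq_neg_one.symm
  let c : A.X 0 ⟶ A'.X (-3+1+1) := A.d (-1) ≫ eqToHom e1
  let γ : c ≫ A'.d (-3+1) ⟶ zmap (A.X 0) (A'.X (-3+1)) :=
    zeroTrack (hA'.eq_zero_of_lt (-3+1) (by norm_num)) _ _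
  let hb := hex (-3) (A.X 0) (hmem 0 le_rfl) c γ
    (track_eq_of_zero (hA'.eq_zero_of_lt (-3) (by norm_num)) _ _)
  { n := -2
    hn := le_refl _
    f0 := eqToHom ((hA.eq_zero_of_lt (-2) (by norm_num)).trans
      (hA'.eq_zero_of_lt (-2) (by norm_num)).symm)
    f1 := eqToHom e1
    f2 := hb.choose
    φ0 := zeroTrack (hA'.eq_zero_of_lt (-2) (by norm_num)) _ _
    φ1 := hb.choose_spec.choose
    chain := track_eq_of_zero (hA'.eq_zero_of_lt (-2) (by norm_num)) _ _
    cyc := track_eq_of_zero (hA'.eq_zero_of_lt (-2) (by norm_num)) _ _ }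

/-- The tower of windows. -/
noncomputable def seq (k : ℕ) : Data hinv A A' :=
  Nat.rec (base hinv Pb B₀ A A' hA hA' hmem hex)
    (fun _ d => step hinv Pb A A' hmem hex d) k

lemma seq_n (k : ℕ) : (seq hinv Pb B₀ A A' hA hA' hmem hex k).n = -2 + k := by
  induction k with
  | zero => show (-2 : ℤ) = -2 + ((0:ℕ):ℤ); simp
  | succ k ih =>
      show (seq hinv Pb B₀ A A' hA hA' hmem hex k).n + 1 = -2 + ((k+1:ℕ):ℤ)
      rw [ih]; push_cast; ring

/-- Transport of a vertical map along an equality of degrees. -/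
def tport {ν m : ℤ} (h : ν = m) (u : A.X ν ⟶ A'.X ν) : A.X m ⟶ A'.X m := h ▸ u

/-- The final sequence of vertical maps. -/
noncomputable def Fmap (m : ℤ) : A.X m ⟶ A'.X m :=
  if h : -2 ≤ m then
    tport A A' (show (seq hinv Pb B₀ A A' hA hA' hmem hex (m+2).toNat).n = m by
        rw [seq_n]; omega)
      (seq hinv Pb B₀ A A' hA hA' hmem hex (m+2).toNat).f0
  else eqToHom ((hA.eq_zero_of_lt m (by omega)).trans (hA'.eq_zero_of_lt m (by omega)).symm)

lemma tport_seq (j k : ℕ) (h : j = k)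
    (hk : (seq hinv Pb B₀ A A' hA hA' hmem hex j).n =
      (seq hinv Pb B₀ A A' hA hA' hmem hex k).n) :
    tport A A' hk (seq hinv Pb B₀ A A' hA hA' hmem hex j).f0 =
      (seq hinv Pb B₀ A A' hA hA' hmem hex k).f0 := by
  subst h; rfl

lemma Fspec (k : ℕ) :
    Fmap hinv Pb B₀ A A' hA hA' hmem hex ((seq hinv Pb B₀ A A' hA hA' hmem hex k).n) =
      (seq hinv Pb B₀ A A' hA hA' hmem hex k).f0 := by
  have hK : (((seq hinv Pb B₀ A A' hA hA' hmem hex k).n + 2).toNat) = k := by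
    rw [seq_n]; omega
  unfold Fmap
  rw [dif_pos (seq hinv Pb B₀ A A' hA hA' hmem hex k).hn]
  exact tport_seq hinv Pb B₀ A A' hA hA' hmem hex _ k hK _

lemma FspecSucc (k : ℕ) :
    Fmap hinv Pb B₀ A A' hA hA' hmem hex ((seq hinv Pb B₀ A A' hA hA' hmem hex k).n + 1) =
      (seq hinv Pb B₀ A A' hA hA' hmem hex k).f1 :=
  Fspec hinv Pb B₀ A A' hA hA' hmem hex (k+1)

lemma FspecSucc2 (k : ℕ) :
    Fmap hinv Pb B₀ A A' hA hA' hmem hex ((seq hinv Pb B₀ A A' hA hA' hmem hex k).n + 1 + 1) =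
      (seq hinv Pb B₀ A A' hA hA' hmem hex k).f2 :=
  Fspec hinv Pb B₀ A A' hA hA' hmem hex (k+2)

/-- Conjugation of a track by equalities of the vertical maps. -/
def conjTrack {n : ℤ} {f0v : A.X n ⟶ A'.X n} {f1v : A.X (n+1) ⟶ A'.X (n+1)}
    (F0 : A.X n ⟶ A'.X n) (F1 : A.X (n+1) ⟶ A'.X (n+1))
    (h0 : F0 = f0v) (h1 : F1 = f1v)
    (φ : (A.d n ≫ f0v) ⟶ (f1v ≫ A'.d n)) : (A.d n ≫ F0) ⟶ (F1 ≫ A'.d n) :=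
  eqToHom (by rw [h0]) ≫ φ ≫ eqToHom (by rw [h1])

lemma conj_chain {n : ℤ} {f0v : A.X n ⟶ A'.X n} {f1v : A.X (n+1) ⟶ A'.X (n+1)}
    {f2v : A.X (n+1+1) ⟶ A'.X (n+1+1)}
    {φ0 : (A.d n ≫ f0v) ⟶ (f1v ≫ A'.d n)} {φ1 : (A.d (n+1) ≫ f1v) ⟶ (f2v ≫ A'.d (n+1))}
    (F0 : A.X n ⟶ A'.X n) (F1 : A.X (n+1) ⟶ A'.X (n+1)) (F2 : A.X (n+1+1) ⟶ A'.X (n+1+1))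
    (h0 : F0 = f0v) (h1 : F1 = f1v) (h2 : F2 = f2v)
    (hc : ChainEq A A' n f0v f1v f2v φ0 φ1) :
    ChainEq A A' n F0 F1 F2 (conjTrack A A' F0 F1 h0 h1 φ0) (conjTrack A A' F1 F2 h1 h2 φ1) := by
  subst h0; subst h1; subst h2
  unfold ChainEq at hc ⊢
  simp only [conjTrack, eqToHom_refl, Category.id_comp, Category.comp_id]
  exact hc

/-- Transport of a track along an equality of degrees. -/
def tportT {ν m : ℤ} (h : ν = m)
    (θ : (A.d ν ≫ Fmap hinv Pb B₀ A A' hA hA' hmem hex ν) ⟶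
      (Fmap hinv Pb B₀ A A' hA hA' hmem hex (ν+1) ≫ A'.d ν)) :
    (A.d m ≫ Fmap hinv Pb B₀ A A' hA hA' hmem hex m) ⟶
      (Fmap hinv Pb B₀ A A' hA hA' hmem hex (m+1) ≫ A'.d m) := h ▸ θ

/-- The final sequence of tracks. -/
noncomputable def Phimap (m : ℤ) :
    (A.d m ≫ Fmap hinv Pb B₀ A A' hA hA' hmem hex m) ⟶
      (Fmap hinv Pb B₀ A A' hA hA' hmem hex (m+1) ≫ A'.d m) :=
  if h : -2 ≤ m then
    tportT hinv Pb B₀ A A' hA hA' hmem hex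
      (show (seq hinv Pb B₀ A A' hA hA' hmem hex (m+2).toNat).n = m by rw [seq_n]; omega)
      (conjTrack A A' _ _ (Fspec hinv Pb B₀ A A' hA hA' hmem hex (m+2).toNat)
        (FspecSucc hinv Pb B₀ A A' hA hA' hmem hex (m+2).toNat)
        ((seq hinv Pb B₀ A A' hA hA' hmem hex (m+2).toNat).φ0))
  else zeroTrack (hA'.eq_zero_of_lt m (by omega)) _ _

lemma tportT_seq (j k : ℕ) (h : j = k)
    (hk : (seq hinv Pb B₀ A A' hA hA' hmem hex j).n =
      (seq hinv Pb B₀ A A' hA hA' hmem hex k).n) :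
    tportT hinv Pb B₀ A A' hA hA' hmem hex hk
      (conjTrack A A' _ _ (Fspec hinv Pb B₀ A A' hA hA' hmem hex j)
        (FspecSucc hinv Pb B₀ A A' hA hA' hmem hex j)
        ((seq hinv Pb B₀ A A' hA hA' hmem hex j).φ0)) =
      conjTrack A A' _ _ (Fspec hinv Pb B₀ A A' hA hA' hmem hex k)
        (FspecSucc hinv Pb B₀ A A' hA hA' hmem hex k)
        ((seq hinv Pb B₀ A A' hA hA' hmem hex k).φ0) := by
  subst h; rfl

lemma Phispec (k : ℕ) :
    Phimap hinv Pb B₀ A A' hA hA' hmem hex ((seq hinv Pb B₀ A A' hA hA' hmem hex k).n) =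
      conjTrack A A' _ _ (Fspec hinv Pb B₀ A A' hA hA' hmem hex k)
        (FspecSucc hinv Pb B₀ A A' hA hA' hmem hex k)
        ((seq hinv Pb B₀ A A' hA hA' hmem hex k).φ0) := by
  have hK : (((seq hinv Pb B₀ A A' hA hA' hmem hex k).n + 2).toNat) = k := by
    rw [seq_n]; omega
  unfold Phimap
  rw [dif_pos (seq hinv Pb B₀ A A' hA hA' hmem hex k).hn]
  exact tportT_seq hinv Pb B₀ A A' hA hA' hmem hex _ k hK _

lemma PhispecSucc (k : ℕ) :
    Phimap hinv Pb B₀ A A' hA hA' hmem hex ((seq hinv Pb B₀ A A' hA hA' hmem hex k).n + 1) =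
      conjTrack A A' _ _ (FspecSucc hinv Pb B₀ A A' hA hA' hmem hex k)
        (FspecSucc2 hinv Pb B₀ A A' hA hA' hmem hex k)
        ((seq hinv Pb B₀ A A' hA hA' hmem hex k).φ1) :=
  Phispec hinv Pb B₀ A A' hA hA' hmem hex (k+1)

/-- The chain-map condition in degree `n`, for the final data. -/
def MapEq (n : ℤ) : Prop :=
  ChainEq A A' n (Fmap hinv Pb B₀ A A' hA hA' hmem hex n)
    (Fmap hinv Pb B₀ A A' hA hA' hmem hex (n+1))
    (Fmap hinv Pb B₀ A A' hA hA' hmem hex (n+1+1))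
    (Phimap hinv Pb B₀ A A' hA hA' hmem hex n)
    (Phimap hinv Pb B₀ A A' hA hA' hmem hex (n+1))

lemma mapEq_seq (k : ℕ) : MapEq hinv Pb B₀ A A' hA hA' hmem hex
    ((seq hinv Pb B₀ A A' hA hA' hmem hex k).n) := by
  unfold MapEq
  rw [Phispec hinv Pb B₀ A A' hA hA' hmem hex k,
    PhispecSucc hinv Pb B₀ A A' hA hA' hmem hex k]
  exact conj_chain A A' _ _ _ (Fspec hinv Pb B₀ A A' hA hA' hmem hex k)
    (FspecSucc hinv Pb B₀ A A' hA hA' hmem hex k)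
    (FspecSucc2 hinv Pb B₀ A A' hA hA' hmem hex k)
    (seq hinv Pb B₀ A A' hA hA' hmem hex k).chain

end Tower


theorem statement12
    (hinv : ∀ {X' Y' : B} {f g : X' ⟶ Y'} (η : f ⟶ g), IsIso η)
    (Pb : B → Prop) (B₀ : B) (A A' : SecChainComplex B)
    (hA : A.IsAugmented B₀) (hA' : A'.IsAugmented B₀)
    (hmem : ∀ n : ℤ, 0 ≤ n → Pb (A.X n))
    (hex : A'.IsSecExact Pb) :
    ∃ (f : ∀ n : ℤ, A.X n ⟶ A'.X n)
      (φ : ∀ n : ℤ, (A.d n ≫ f n) ⟶ (f (n + 1) ≫ A'.d n)),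
      IsSecChainMap A A' f φ ∧
      f (-1) = eqToHom (hA.eq_neg_one.trans hA'.eq_neg_one.symm) := by
  refine ⟨Fmap hinv Pb B₀ A A' hA hA' hmem hex, Phimap hinv Pb B₀ A A' hA hA' hmem hex, ?_, ?_⟩
  · intro n
    by_cases hn : -2 ≤ n
    · have hk : (seq hinv Pb B₀ A A' hA hA' hmem hex (n+2).toNat).n = n := by
        rw [seq_n]; omega
      have h := mapEq_seq hinv Pb B₀ A A' hA hA' hmem hex (n+2).toNat
      rw [hk] at h
      exact h
    · exact track_eq_of_zero (hA'.eq_zero_of_lt n (by omega)) _ _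
  · have h1 : Fmap hinv Pb B₀ A A' hA hA' hmem hex (-1) =
        (seq hinv Pb B₀ A A' hA hA' hmem hex 1).f0 :=
      Fspec hinv Pb B₀ A A' hA hA' hmem hex 1
    rw [h1]
    rfl

end Statement12
end

section
/- Let (X_•,d,δ) be a secondary chain complex in 𝐁, Y an object, c : X_n → Y a map with [c][d_n] = 0 in the homotopy category, and γ : 0 ⇒ c d_n a track. Then the track Γ_{c,γ} := cδ_n □ γd_{n+1} ∈ Aut(0_{X_{n+2},Y}) satisfies Γ_{c,γ} d_{n+2} = 0; that is, whiskering Γ_{c,γ} with d_{n+2} yields the identity track of 0_{X_{n+3},Y}, so Γ_{c,γ} is an (n+2)-cocycle of the cochain complex Aut(0_{X_•,Y}). -/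
/-!
Track categories.  A track category is a category enriched in groupoids, i.e. a strict
2-category (`Bicategory` + `Bicategory.Strict`) all of whose 2-cells ("tracks") are
invertible.  Invertibility of all 2-cells is imposed by the hypothesis `hinv` below.
A strict zero object is an object whose hom-groupoids from and to any object are
trivial (exactly one map, exactly one track).
-/

open CategoryTheory CategoryTheory.Bicategory

universe w v u

section Gamma

variable {B : Type u} [Bicategory.{w, v} B] [Bicategory.Strict B] [StrictZero B]

/-- The track `Γ_{c,γ} = cδ □ γd₁ ∈ Aut(0_{A₂,Y})` associated to maps
`d₁ : A₂ ⟶ A₁`, `d₀ : A₁ ⟶ A₀`, a track `δ : d₀d₁ ⇒ 0`, a map `c : A₀ ⟶ Y` and a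
track `γ : 0 ⇒ c d₀`. -/
def GammaGen {A₂ A₁ A₀ Y : B} (d₁ : A₂ ⟶ A₁) (d₀ : A₁ ⟶ A₀)
    (δ : (d₁ ≫ d₀) ⟶ zmap A₂ A₀) (c : A₀ ⟶ Y) (γ : zmap A₁ Y ⟶ d₀ ≫ c) :
    zmap A₂ Y ⟶ zmap A₂ Y :=
  eqToHom (comp_zmap d₁ Y).symm ≫ (d₁ ◁ γ) ≫
    eqToHom (Bicategory.Strict.assoc d₁ d₀ c).symm ≫ (δ ▷ c) ≫
    eqToHom (zmap_comp A₂ c)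

/-- `Γ_{c,γ}` for a cocycle `c : X_n ⟶ Y` on a secondary chain complex and a track
`γ : 0 ⇒ c d_n`. -/
def SecChainComplex.Gamma (S : SecChainComplex B) {Y : B} (n : ℤ)
    (c : S.X n ⟶ Y) (γ : zmap (S.X (n + 1)) Y ⟶ S.d n ≫ c) :
    zmap (S.X (n + 1 + 1)) Y ⟶ zmap (S.X (n + 1 + 1)) Y :=
  GammaGen (S.d (n + 1)) (S.d n) (S.δ n) c γ

end Gamma

section Helpers

variable {B : Type u} [Bicategory.{w, v} B] [Bicategory.Strict B] [StrictZero B]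

lemma track_to_zobj {X : B} {f g : X ⟶ StrictZero.zobj (B := B)} (η : f ⟶ g) (h : f = g) :
    η = eqToHom h := by
  subst h
  haveI := StrictZero.uniqueTrackTo (B := B) X f f
  exact Subsingleton.elim _ _

lemma track_from_zobj {X : B} {f g : StrictZero.zobj (B := B) ⟶ X} (η : f ⟶ g) (h : f = g) :
    η = eqToHom h := by
  subst h
  haveI := StrictZero.uniqueTrackFrom (B := B) X f f
  exact Subsingleton.elim _ _

lemma whiskerRight_zmap {X Y Z : B} {f g : X ⟶ Y} (η : f ⟶ g) :
    η ▷ zmap Y Z = eqToHom ((comp_zmap f Z).trans (comp_zmap g Z).symm) := by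
  show η ▷ ((StrictZero.uniqueTo Y).default ≫ (StrictZero.uniqueFrom Z).default) = _
  rw [Bicategory.whiskerRight_comp]
  haveI := StrictZero.uniqueTo (B := B) X
  rw [track_to_zobj (η ▷ (StrictZero.uniqueTo Y).default) (Subsingleton.elim _ _)]
  simp [Bicategory.Strict.associator_eqToIso, Bicategory.eqToHom_whiskerRight, eqToHom_trans]
  rfl

lemma whiskerLeft_zmap {X Y Z : B} {f g : Y ⟶ Z} (η : f ⟶ g) :
    zmap X Y ◁ η = eqToHom ((zmap_comp X f).trans (zmap_comp X g).symm) := by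
  show ((StrictZero.uniqueTo X).default ≫ (StrictZero.uniqueFrom Y).default) ◁ η = _
  rw [Bicategory.comp_whiskerLeft]
  haveI := StrictZero.uniqueFrom (B := B) Z
  rw [track_from_zobj ((StrictZero.uniqueFrom Y).default ◁ η) (Subsingleton.elim _ _)]
  simp [Bicategory.Strict.associator_eqToIso, Bicategory.whiskerLeft_eqToHom, eqToHom_trans]
  rfl

end Helpers

/-!
STATEMENT 15. Let `(X_•, d, δ)` be a secondary chain complex in `𝐁`, `Y` an object,
`c : X_n ⟶ Y` a map with `[c][d_n] = 0` in the homotopy category (i.e. there is a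
track `0 ⇒ c d_n`), and `γ : 0 ⇒ c d_n` a track.  Then
`Γ_{c,γ} := c δ_n □ γ d_{n+1} ∈ Aut(0_{X_{n+2},Y})` satisfies `Γ_{c,γ} d_{n+2} = 0`:
whiskering `Γ_{c,γ}` with `d_{n+2}` yields the identity track of `0_{X_{n+3},Y}`.
So `Γ_{c,γ}` is an `(n+2)`-cocycle of the cochain complex `Aut(0_{X_•,Y})`.
-/

theorem statement15 {B : Type u} [Bicategory.{w, v} B] [Bicategory.Strict B]
    [StrictZero B]
    (hinv : ∀ {X' Y' : B} {f g : X' ⟶ Y'} (η : f ⟶ g), IsIso η)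
    (S : SecChainComplex B) (Y : B) (n : ℤ) (c : S.X n ⟶ Y)
    (hc : Nonempty ((S.d n ≫ c) ⟶ zmap (S.X (n + 1)) Y))
    (γ : zmap (S.X (n + 1)) Y ⟶ S.d n ≫ c) :
    eqToHom (comp_zmap (S.d (n + 1 + 1)) Y).symm ≫
        (S.d (n + 1 + 1) ◁ S.Gamma n c γ) ≫
        eqToHom (comp_zmap (S.d (n + 1 + 1)) Y) =
      𝟙 (zmap (S.X (n + 1 + 1 + 1)) Y) := by
  have hδ : S.d (n + 1 + 1) ◁ S.δ n =
      eqToHom (Bicategory.Strict.assoc (S.d (n + 1 + 1)) (S.d (n + 1)) (S.d n)).symm ≫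
      (S.δ (n + 1) ▷ S.d n) ≫
      eqToHom ((zmap_comp (S.X (n + 1 + 1 + 1)) (S.d n)).trans
        (comp_zmap (S.d (n + 1 + 1)) (S.X n)).symm) := by
    have h := S.compat n
    calc S.d (n + 1 + 1) ◁ S.δ n
        = eqToHom (Bicategory.Strict.assoc (S.d (n + 1 + 1)) (S.d (n + 1)) (S.d n)).symm ≫
          (eqToHom (Bicategory.Strict.assoc (S.d (n + 1 + 1)) (S.d (n + 1)) (S.d n)) ≫
            (S.d (n + 1 + 1) ◁ S.δ n) ≫
            eqToHom (comp_zmap (S.d (n + 1 + 1)) (S.X n))) ≫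
          eqToHom (comp_zmap (S.d (n + 1 + 1)) (S.X n)).symm := by
            simp [eqToHom_trans]
      _ = _ := by rw [← h]; simp [eqToHom_trans]
  have h1 : S.d (n + 1 + 1) ◁ (S.d (n + 1) ◁ γ) =
      eqToHom (Bicategory.Strict.assoc _ _ _).symm ≫ ((S.d (n + 1 + 1) ≫ S.d (n + 1)) ◁ γ) ≫
        eqToHom (Bicategory.Strict.assoc _ _ _) := by
    rw [Bicategory.comp_whiskerLeft]
    simp [Bicategory.Strict.associator_eqToIso, eqToHom_trans]
  have h2 : S.d (n + 1 + 1) ◁ (S.δ n ▷ c) =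
      eqToHom (Bicategory.Strict.assoc _ _ _).symm ≫ ((S.d (n + 1 + 1) ◁ S.δ n) ▷ c) ≫
        eqToHom (Bicategory.Strict.assoc _ _ _) := by
    rw [Bicategory.whisker_assoc]
    simp [Bicategory.Strict.associator_eqToIso, eqToHom_trans]
  have h3 : (S.δ (n + 1) ▷ S.d n) ▷ c = eqToHom (Bicategory.Strict.assoc _ _ _) ≫
      (S.δ (n + 1) ▷ (S.d n ≫ c)) ≫ eqToHom (Bicategory.Strict.assoc _ _ _).symm := by
    rw [Bicategory.whiskerRight_comp]
    simp [Bicategory.Strict.associator_eqToIso, eqToHom_trans]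
  have hex := Bicategory.whisker_exchange (f := S.d (n + 1 + 1) ≫ S.d (n + 1))
    (g := zmap (S.X (n + 1 + 1 + 1)) (S.X (n + 1))) (S.δ (n + 1)) γ
  simp only [SecChainComplex.Gamma, GammaGen, Bicategory.whiskerLeft_comp,
    Bicategory.whiskerLeft_eqToHom, Category.assoc, h1, h2, hδ,
    Bicategory.comp_whiskerRight, Bicategory.eqToHom_whiskerRight, h3,
    eqToHom_trans, eqToHom_trans_assoc, eqToHom_refl, Category.id_comp]
  rw [whiskerRight_zmap, whiskerLeft_zmap] at hex
  simp only [reassoc_of% hex, eqToHom_trans, eqToHom_trans_assoc, eqToHom_refl]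
end
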